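/- There exists N such that for every even integer n ≥ N there is an n×n matrix with entries in {0,1} that satisfies the 2-configuration exhibiting condition but does not satisfy the convex Ramsey condition. -/

import Mathlib

/-- An `n × m` matrix (given as a function) has entries in `{0,1}`. -/
def Entries01 {n m : ℕ} (X : Fin n → Fin m → ℝ) : Prop :=
  ∀ i j, X i j = 0 ∨ X i j = 1

/-- The convex Ramsey condition: there is a probability vector `P` such that
`∑ i, P i * (X i j - X i k) ≤ 1/2` for every pair of distinct columns `j, k`. -/
def ConvexRamsey {n m : ℕ} (X : Fin n → Fin m → ℝ) : Prop :=
  ∃ P : Fin n → ℝ, (∀ i, 0 ≤ P i) ∧ (∑ i, P i = 1) ∧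
    ∀ j k : Fin m, j ≠ k → ∑ i, P i * (X i j - X i k) ≤ 1 / 2

/-- The `k`-configuration exhibiting condition. -/
def ConfigExhibit {n m : ℕ} (k : ℕ) (X : Fin n → Fin m → ℝ) : Prop :=
  ∀ σ : Fin k → ℝ, (∀ i, σ i = 0 ∨ σ i = 1) →
    ∀ l : Fin k → Fin m, StrictMono l →
      ∃ j : Fin n, ∀ i : Fin k, X j (l i) = σ i

/-- tail element attached to column `j`. -/
def crTail (m j : ℕ) : ℕ := (j % m + 1) % m + m * ((j / m % m + 1 + j / (m * m)) % m)

/-- membership of row `i` in the set attached to column `j`. -/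
def crS (m i j : ℕ) : Prop :=
  i % m = j % m ∨ i / m % m = j / m % m ∨ i = crTail m j

instance crSDec (m i j : ℕ) : Decidable (crS m i j) := by unfold crS; infer_instance

lemma elt_mod {m : ℕ} (A B : ℕ) (hA : A < m) : (A + m * B) % m = A := by
  rw [Nat.add_mul_mod_self_left, Nat.mod_eq_of_lt hA]

lemma elt_div {m : ℕ} (A B : ℕ) (hA : A < m) : (A + m * B) / m = B := by
  rw [Nat.add_mul_div_left _ _ (Nat.pos_of_ne_zero (by omega)), Nat.div_eq_of_lt hA, Nat.zero_add]

lemma elt_lt {m A B : ℕ} (hA : A < m) (hB : B < m) : A + m * B < m * m := by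
  nlinarith

lemma crRecon (m j : ℕ) : j % m + m * (j / m % m + m * (j / (m * m))) = j := by
  conv_rhs => rw [← Nat.mod_add_div j m, ← Nat.mod_add_div (j / m) m, Nat.div_div_eq_div_mul]

lemma cancel_right {m x y c : ℕ} (hx : x < m) (hy : y < m)
    (h : (x + c) % m = (y + c) % m) : x = y := by
  have h2 : x ≡ y [MOD m] := Nat.ModEq.add_right_cancel' c h
  rwa [Nat.ModEq, Nat.mod_eq_of_lt hx, Nat.mod_eq_of_lt hy] at h2

lemma cancel_left {m b c1 c2 : ℕ} (h1 : c1 < m) (h2 : c2 < m)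
    (h : (b + c1) % m = (b + c2) % m) : c1 = c2 := by
  have h3 : c1 ≡ c2 [MOD m] := Nat.ModEq.add_left_cancel' b h
  rwa [Nat.ModEq, Nat.mod_eq_of_lt h1, Nat.mod_eq_of_lt h2] at h3

lemma crTail_mod {m : ℕ} (hm : 0 < m) (j : ℕ) : crTail m j % m = (j % m + 1) % m :=
  elt_mod _ _ (Nat.mod_lt _ hm)

lemma crTail_div {m : ℕ} (hm : 0 < m) (j : ℕ) :
    crTail m j / m = (j / m % m + 1 + j / (m * m)) % m :=
  elt_div _ _ (Nat.mod_lt _ hm)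

lemma crTail_lt {m : ℕ} (hm : 0 < m) (j : ℕ) : crTail m j < m * m :=
  elt_lt (Nat.mod_lt _ hm) (Nat.mod_lt _ hm)

lemma exists_avoid (m : ℕ) (s : Finset ℕ) (h : s.card < m) : ∃ β, β < m ∧ β ∉ s := by
  have hns : ¬ (Finset.range m ⊆ s) := by
    intro hsub
    have := Finset.card_le_card hsub
    rw [Finset.card_range] at this
    omega
  obtain ⟨β, hβ, hb⟩ := Finset.not_subset.mp hns
  exact ⟨β, Finset.mem_range.mp hβ, hb⟩

lemma succ_mod_ne {m a : ℕ} (hm : 2 ≤ m) (ha : a < m) : (a + 1) % m ≠ a := by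
  intro h
  rcases Nat.lt_or_ge (a + 1) m with hlt | hge
  · rw [Nat.mod_eq_of_lt hlt] at h; omega
  · have he : a + 1 = m := by omega
    rw [he, Nat.mod_self] at h; omega

lemma addc_mod_ne {m b c : ℕ} (hc1 : 1 ≤ c) (hcm : c < m) (hb : b < m) : (b + c) % m ≠ b := by
  intro h
  rcases Nat.lt_or_ge (b + c) m with hlt | hge
  · rw [Nat.mod_eq_of_lt hlt] at h; omega
  · rw [Nat.mod_eq_sub_mod hge, Nat.mod_eq_of_lt (by omega)] at h
    omega

lemma card4 (a b c d : ℕ) : ({a, b, c, d} : Finset ℕ).card ≤ 4 := by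
  refine le_trans (Finset.card_insert_le _ _) (Nat.succ_le_succ ?_)
  refine le_trans (Finset.card_insert_le _ _) (Nat.succ_le_succ ?_)
  refine le_trans (Finset.card_insert_le _ _) (Nat.succ_le_succ ?_)
  simp

lemma card2 (a b : ℕ) : ({a, b} : Finset ℕ).card ≤ 2 := by
  refine le_trans (Finset.card_insert_le _ _) (Nat.succ_le_succ ?_)
  simp

section regions
set_option linter.unusedSectionVars false
variable {m n : ℕ} (hm : 5 ≤ m) (hmn : m * m ≤ n) (hn2 : n < (m + 1) * (m + 1))

include hm hmn

lemma crS_meet (j k : ℕ) : ∃ i < n, crS m i j ∧ crS m i k := by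
  have hm0 : 0 < m := by omega
  refine ⟨j % m + m * (k / m % m), ?_, ?_, ?_⟩
  · exact lt_of_lt_of_le (elt_lt (Nat.mod_lt _ hm0) (Nat.mod_lt _ hm0)) hmn
  · exact Or.inl (elt_mod _ _ (Nat.mod_lt _ hm0))
  · refine Or.inr (Or.inl ?_)
    rw [elt_div _ _ (Nat.mod_lt _ hm0)]
    exact Nat.mod_mod_of_dvd _ dvd_rfl

include hn2

lemma crEps_lt (j : ℕ) (hj : j < n) : j / (m * m) < 2 := by
  rw [Nat.div_lt_iff_lt_mul (by positivity : 0 < m * m)]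
  nlinarith

lemma crS_sep (j k : ℕ) (hj : j < n) (hk : k < n) (hjk : j ≠ k) :
    ∃ i < n, crS m i j ∧ ¬ crS m i k := by
  have hm0 : 0 < m := by omega
  have ha : j % m < m := Nat.mod_lt _ hm0
  have hb : j / m % m < m := Nat.mod_lt _ hm0
  by_cases haa : j % m = k % m
  · by_cases hbb : j / m % m = k / m % m
    · -- twins
      have hεj : j / (m * m) < 2 := crEps_lt hm hmn hn2 j hj
      have hεk : k / (m * m) < 2 := crEps_lt hm hmn hn2 k hk
      have hεε : j / (m * m) ≠ k / (m * m) := by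
        intro hee
        apply hjk
        rw [← crRecon m j, ← crRecon m k, haa, hbb, hee]
      refine ⟨crTail m j, lt_of_lt_of_le (crTail_lt hm0 j) hmn, Or.inr (Or.inr rfl), ?_⟩
      rintro (h1 | h2 | h3)
      · rw [crTail_mod hm0, ← haa] at h1
        exact succ_mod_ne (by omega) ha h1
      · rw [crTail_div hm0, Nat.mod_mod_of_dvd _ dvd_rfl, ← hbb] at h2
        have h2' : (j / m % m + (1 + j / (m * m))) % m = j / m % m := by
          rw [← Nat.add_assoc]; exact h2
        exact addc_mod_ne (m := m) (b := j / m % m) (c := 1 + j / (m * m))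
          (Nat.le_add_right 1 _) (lt_of_lt_of_le (Nat.add_lt_add_left hεj 1) (by omega)) hb h2'
      · have hdiv := congrArg (· / m) h3
        simp only [crTail_div hm0] at hdiv
        have heq : 1 + j / (m * m) = 1 + k / (m * m) := by
          refine cancel_left (m := m) (b := k / m % m)
            (lt_of_lt_of_le (Nat.add_lt_add_left hεj 1) (by omega))
            (lt_of_lt_of_le (Nat.add_lt_add_left hεk 1) (by omega)) ?_
          rw [hbb] at hdiv
          rw [← Nat.add_assoc, ← Nat.add_assoc]
          exact hdiv
        exact hεε (Nat.add_left_cancel heq)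
    · -- same residue, different block class
      obtain ⟨r, hr, hrs⟩ := exists_avoid m {k % m, crTail m k % m}
        (lt_of_le_of_lt (card2 _ _) (by omega))
      simp only [Finset.mem_insert, Finset.mem_singleton, not_or] at hrs
      refine ⟨r + m * (j / m % m), lt_of_lt_of_le (elt_lt hr hb) hmn, ?_, ?_⟩
      · refine Or.inr (Or.inl ?_)
        rw [elt_div _ _ hr]
        exact Nat.mod_mod_of_dvd _ dvd_rfl
      · rintro (h1 | h2 | h3)
        · rw [elt_mod _ _ hr] at h1; exact hrs.1 h1
        · rw [elt_div _ _ hr, Nat.mod_mod_of_dvd _ dvd_rfl] at h2; exact hbb h2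
        · have := congrArg (· % m) h3
          simp only [elt_mod _ _ hr] at this
          exact hrs.2 this
  · -- different residues
    obtain ⟨β, hβ, hβs⟩ := exists_avoid m {k / m % m, crTail m k / m}
      (lt_of_le_of_lt (card2 _ _) (by omega))
    simp only [Finset.mem_insert, Finset.mem_singleton, not_or] at hβs
    refine ⟨j % m + m * β, lt_of_lt_of_le (elt_lt ha hβ) hmn, ?_, ?_⟩
    · exact Or.inl (by rw [elt_mod _ _ ha])
    · rintro (h1 | h2 | h3)
      · rw [elt_mod _ _ ha] at h1; exact haa h1
      · rw [elt_div _ _ ha, Nat.mod_eq_of_lt hβ] at h2; exact hβs.1 h2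
      · have := congrArg (· / m) h3
        simp only [elt_div _ _ ha] at this
        exact hβs.2 this

lemma crS_none (j k : ℕ) : ∃ i < n, ¬ crS m i j ∧ ¬ crS m i k := by
  have hm0 : 0 < m := by omega
  obtain ⟨r, hr, hrs⟩ := exists_avoid m {j % m, k % m, crTail m j % m, crTail m k % m}
    (lt_of_le_of_lt (card4 _ _ _ _) (by omega))
  obtain ⟨β, hβ, hβs⟩ := exists_avoid m {j / m % m, k / m % m}
    (lt_of_le_of_lt (card2 _ _) (by omega))
  simp only [Finset.mem_insert, Finset.mem_singleton, not_or] at hrs hβs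
  refine ⟨r + m * β, lt_of_lt_of_le (elt_lt hr hβ) hmn, ?_, ?_⟩
  · rintro (h1 | h2 | h3)
    · rw [elt_mod _ _ hr] at h1; exact hrs.1 h1
    · rw [elt_div _ _ hr, Nat.mod_eq_of_lt hβ] at h2; exact hβs.1 h2
    · have := congrArg (· % m) h3
      simp only [elt_mod _ _ hr] at this
      exact hrs.2.2.1 this
  · rintro (h1 | h2 | h3)
    · rw [elt_mod _ _ hr] at h1; exact hrs.2.1 h1
    · rw [elt_div _ _ hr, Nat.mod_eq_of_lt hβ] at h2; exact hβs.2 h2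
    · have := congrArg (· % m) h3
      simp only [elt_mod _ _ hr] at this
      exact hrs.2.2.2 this

lemma crS_regions (j k : ℕ) (hj : j < n) (hk : k < n) (hjk : j ≠ k) (b0 b1 : Bool) :
    ∃ i < n, (crS m i j ↔ b0 = true) ∧ (crS m i k ↔ b1 = true) := by
  cases b0 <;> cases b1 <;>
    simp only [iff_true, Bool.false_eq_true, iff_false]
  · exact crS_none hm hmn hn2 j k
  · obtain ⟨i, hi, h1, h2⟩ := crS_sep hm hmn hn2 k j hk hj (Ne.symm hjk)
    exact ⟨i, hi, h2, h1⟩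
  · exact crS_sep hm hmn hn2 j k hj hk hjk
  · exact crS_meet hm hmn j k

end regions


section counting
set_option linter.unusedSectionVars false
variable {m n : ℕ} (hm : 5 ≤ m) (hmn : m * m ≤ n) (hn2 : n < (m + 1) * (m + 1))

include hm hmn hn2

lemma crDeg_le (i : ℕ) :
    (Finset.univ.filter (fun j : Fin n => crS m i j.val)).card ≤ 3 * m + 5 := by
  classical
  have hm0 : 0 < m := by omega
  set F1 := Finset.univ.filter (fun j : Fin n => i % m = j.val % m) with hF1
  set F2 := Finset.univ.filter (fun j : Fin n => i / m % m = j.val / m % m) with hF2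
  set F3 := Finset.univ.filter (fun j : Fin n => i = crTail m j.val) with hF3
  have hsub : Finset.univ.filter (fun j : Fin n => crS m i j.val) ⊆ F1 ∪ F2 ∪ F3 := by
    intro j hj
    simp only [Finset.mem_filter, Finset.mem_univ, true_and, crS] at hj
    simp only [Finset.mem_union, hF1, hF2, hF3, Finset.mem_filter, Finset.mem_univ, true_and]
    have hj' := (Finset.mem_filter.mp hj).2
    tauto
  have h1 : F1.card ≤ (Finset.range (m + 3)).card := by
    apply Finset.card_le_card_of_injOn (fun j => (j : Fin n).val / m)
    · intro j hj
      simp only [Finset.mem_coe, Finset.mem_range]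
      rw [Nat.div_lt_iff_lt_mul hm0]
      have : (j : Fin n).val < n := j.isLt
      nlinarith
    · intro j hj k hk hjk2
      have hjk3 : (j : Fin n).val / m = (k : Fin n).val / m := hjk2
      simp only [hF1, Finset.coe_filter, Set.mem_setOf_eq, Finset.mem_univ, true_and] at hj hk
      apply Fin.ext
      calc (j : Fin n).val = m * (j.val / m) + j.val % m := (Nat.div_add_mod _ _).symm
        _ = m * (k.val / m) + k.val % m := by rw [hjk3, ← hj, ← hk]
        _ = k.val := Nat.div_add_mod _ _
  rw [Finset.card_range] at h1
  have h2 : F2.card ≤ (Finset.range (2 * m)).card := by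
    apply Finset.card_le_card_of_injOn
      (fun j => (j : Fin n).val % m + m * ((j : Fin n).val / (m * m)))
    · intro j hj
      simp only [Finset.mem_coe, Finset.mem_range]
      have hε : (j : Fin n).val / (m * m) < 2 := crEps_lt hm hmn hn2 _ j.isLt
      have hr : (j : Fin n).val % m < m := Nat.mod_lt _ hm0
      have : m * ((j : Fin n).val / (m * m)) ≤ m * 1 := Nat.mul_le_mul_left m (by omega)
      rw [Nat.mul_one] at this
      omega
    · intro j hj k hk hjk2
      have hjk3 : (j : Fin n).val % m + m * ((j : Fin n).val / (m * m))
          = (k : Fin n).val % m + m * ((k : Fin n).val / (m * m)) := hjk2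
      simp only [hF2, Finset.coe_filter, Set.mem_setOf_eq, Finset.mem_univ, true_and] at hj hk
      have hrj : (j : Fin n).val % m < m := Nat.mod_lt _ hm0
      have hrk : (k : Fin n).val % m < m := Nat.mod_lt _ hm0
      have e1 : (j : Fin n).val % m = (k : Fin n).val % m := by
        have := congrArg (· % m) hjk3
        simpa only [elt_mod _ _ hrj, elt_mod _ _ hrk] using this
      have e2 : (j : Fin n).val / (m * m) = (k : Fin n).val / (m * m) := by
        have := congrArg (· / m) hjk3
        simpa only [elt_div _ _ hrj, elt_div _ _ hrk] using this
      apply Fin.ext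
      calc (j : Fin n).val
          = j.val % m + m * (j.val / m % m + m * (j.val / (m * m))) := (crRecon m _).symm
        _ = k.val % m + m * (k.val / m % m + m * (k.val / (m * m))) := by
            rw [e1, e2, ← hj, ← hk]
        _ = k.val := crRecon m _
  rw [Finset.card_range] at h2
  have h3 : F3.card ≤ (Finset.range 2).card := by
    apply Finset.card_le_card_of_injOn (fun j => (j : Fin n).val / (m * m))
    · intro j hj
      simp only [Finset.mem_coe, Finset.mem_range]
      exact crEps_lt hm hmn hn2 _ j.isLt
    · intro j hj k hk hjk2
      have hjk3 : (j : Fin n).val / (m * m) = (k : Fin n).val / (m * m) := hjk2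
      simp only [hF3, Finset.coe_filter, Set.mem_setOf_eq, Finset.mem_univ, true_and] at hj hk
      have ht : crTail m (j : Fin n).val = crTail m (k : Fin n).val := by rw [← hj, ← hk]
      have hmodt := congrArg (· % m) ht
      have hdivt := congrArg (· / m) ht
      simp only [crTail_mod hm0, crTail_div hm0] at hmodt hdivt
      have e1 : (j : Fin n).val % m = (k : Fin n).val % m :=
        cancel_right (Nat.mod_lt _ hm0) (Nat.mod_lt _ hm0) hmodt
      have e2 : (j : Fin n).val / m % m = (k : Fin n).val / m % m := by
        refine cancel_right (m := m) (Nat.mod_lt _ hm0) (Nat.mod_lt _ hm0)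
          (c := 1 + (j : Fin n).val / (m * m)) ?_
        rw [← Nat.add_assoc, ← Nat.add_assoc]
        calc ((j : Fin n).val / m % m + 1 + (j : Fin n).val / (m * m)) % m
            = ((k : Fin n).val / m % m + 1 + (k : Fin n).val / (m * m)) % m := hdivt
          _ = ((k : Fin n).val / m % m + 1 + (j : Fin n).val / (m * m)) % m := by rw [hjk3]
      apply Fin.ext
      calc (j : Fin n).val
          = j.val % m + m * (j.val / m % m + m * (j.val / (m * m))) := (crRecon m _).symm
        _ = k.val % m + m * (k.val / m % m + m * (k.val / (m * m))) := by rw [e1, e2, hjk3]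
        _ = k.val := crRecon m _
  rw [Finset.card_range] at h3
  calc (Finset.univ.filter (fun j : Fin n => crS m i j.val)).card
      ≤ (F1 ∪ F2 ∪ F3).card := Finset.card_le_card hsub
    _ ≤ (F1 ∪ F2).card + F3.card := Finset.card_union_le _ _
    _ ≤ F1.card + F2.card + F3.card := by
        have := Finset.card_union_le F1 F2
        omega
    _ ≤ (m + 3) + 2 * m + 2 := by omega
    _ = 3 * m + 5 := by ring

end counting

/-- There exists `N` such that for every even `n ≥ N` there is an `n × n` matrix with
entries in `{0,1}` satisfying the `2`-configuration exhibiting condition but not the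
convex Ramsey condition. -/
theorem exists_threshold_config_exhibiting_not_convexRamsey :
    ∃ N : ℕ, ∀ n : ℕ, N ≤ n → Even n →
      ∃ X : Fin n → Fin n → ℝ,
        Entries01 X ∧ ConfigExhibit 2 X ∧ ¬ ConvexRamsey X := by
  classical
  refine ⟨10000, ?_⟩
  intro n hn heven
  set m := Nat.sqrt n with hmdef
  have hmn : m * m ≤ n := by
    have := Nat.sqrt_le' n
    simpa [pow_two] using this
  have hn2 : n < (m + 1) * (m + 1) := by
    have := Nat.lt_succ_sqrt' n
    simpa [pow_two, Nat.succ_eq_add_one] using this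
  have hm : 100 ≤ m := Nat.le_sqrt.mpr (by omega)
  have hm5 : 5 ≤ m := by omega
  have hnmod : n % 2 = 0 := by
    obtain ⟨r, hr⟩ := heven; omega
  set X : Fin n → Fin n → ℝ := fun i j =>
    if j.val % 2 = 0 then (if crS m i.val j.val then 1 else 0)
    else (if crS m i.val j.val then 0 else 1) with hX
  refine ⟨X, ?_, ?_, ?_⟩
  · -- Entries01
    intro i j
    by_cases h1 : j.val % 2 = 0 <;> by_cases h2 : crS m i.val j.val <;>
      simp [hX, h1, h2]
  · -- ConfigExhibit
    intro σ hσ l hl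
    have hlt : l 0 < l 1 := hl (by decide : (0 : Fin 2) < 1)
    have hne : (l 0).val ≠ (l 1).val := fun h => absurd (Fin.ext h) (ne_of_lt hlt)
    have hbool : ∀ t : Fin 2, ∃ b : Bool, ∀ i : Fin n,
        (crS m i.val (l t).val ↔ b = true) → X i (l t) = σ t := by
      intro t
      rcases hσ t with h0 | h0
      · by_cases hp : (l t).val % 2 = 0
        · refine ⟨false, fun i hi => ?_⟩
          have hns : ¬ crS m i.val (l t).val := by simpa using hi
          simp [hX, hp, hns, h0]
        · refine ⟨true, fun i hi => ?_⟩
          have hcs : crS m i.val (l t).val := hi.mpr rfl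
          simp [hX, hp, hcs, h0]
      · by_cases hp : (l t).val % 2 = 0
        · refine ⟨true, fun i hi => ?_⟩
          have hcs : crS m i.val (l t).val := hi.mpr rfl
          simp [hX, hp, hcs, h0]
        · refine ⟨false, fun i hi => ?_⟩
          have hns : ¬ crS m i.val (l t).val := by simpa using hi
          simp [hX, hp, hns, h0]
    obtain ⟨b0, hb0⟩ := hbool 0
    obtain ⟨b1, hb1⟩ := hbool 1
    obtain ⟨i, hi, h0, h1⟩ := crS_regions hm5 hmn hn2 (l 0).val (l 1).val
      (l 0).isLt (l 1).isLt hne b0 b1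
    refine ⟨⟨i, hi⟩, ?_⟩
    intro t
    fin_cases t
    · exact hb0 ⟨i, hi⟩ h0
    · exact hb1 ⟨i, hi⟩ h1
  · -- ¬ ConvexRamsey
    rintro ⟨P, hP0, hPsum, hPle⟩
    set χ : Fin n → Fin n → ℝ := fun i j => if crS m i.val j.val then 1 else 0 with hχ
    set s : Fin n → ℝ := fun j => ∑ i, P i * χ i j with hs
    have hχ0 : ∀ i j, 0 ≤ χ i j := by
      intro i j
      by_cases h : crS m i.val j.val <;> simp [hχ, h]
    have hs0 : ∀ j, 0 ≤ s j := fun j => Finset.sum_nonneg fun i _ =>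
      mul_nonneg (hP0 i) (hχ0 i j)
    have hkey : ∀ j k : Fin n, ¬ (j.val % 2 = 0) → k.val % 2 = 0 → 1/2 ≤ s j + s k := by
      intro j k hj hk
      have hnejk : j ≠ k := fun h => hj (h ▸ hk)
      have hle := hPle j k hnejk
      have hpt : ∀ i : Fin n, P i * (X i j - X i k)
          = P i - (P i * χ i j + P i * χ i k) := by
        intro i
        by_cases h1 : crS m i.val j.val <;> by_cases h2 : crS m i.val k.val <;>
          simp [hX, hχ, hj, hk, h1, h2] <;> ring
      have hsumeq : ∑ i, P i * (X i j - X i k) = (∑ i, P i) - (s j + s k) := by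
        rw [Finset.sum_congr rfl fun i _ => hpt i, Finset.sum_sub_distrib,
          Finset.sum_add_distrib]
      rw [hsumeq, hPsum] at hle
      linarith
    have hT : ∑ j, s j ≤ (3 * (m : ℝ) + 5) := by
      have hswap : ∑ j, s j = ∑ i : Fin n, P i * ∑ j : Fin n, χ i j := by
        simp only [hs]
        rw [Finset.sum_comm]
        exact Finset.sum_congr rfl fun i _ => (Finset.mul_sum _ _ _).symm
      rw [hswap]
      have hbound : ∀ i : Fin n, P i * ∑ j : Fin n, χ i j ≤ P i * (3 * (m : ℝ) + 5) := by
        intro i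
        apply mul_le_mul_of_nonneg_left _ (hP0 i)
        have hcard : ∑ j : Fin n, χ i j
            = ((Finset.univ.filter fun j : Fin n => crS m i.val j.val).card : ℝ) := by
          simp only [hχ]
          exact Finset.sum_boole _ _
        rw [hcard]
        have hdeg := crDeg_le hm5 hmn hn2 (i.val) (n := n)
        calc ((Finset.univ.filter fun j : Fin n => crS m i.val j.val).card : ℝ)
            ≤ ((3 * m + 5 : ℕ) : ℝ) := Nat.cast_le.mpr hdeg
          _ = 3 * (m : ℝ) + 5 := by push_cast; ring
      calc ∑ i : Fin n, P i * ∑ j : Fin n, χ i j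
          ≤ ∑ i : Fin n, P i * (3 * (m : ℝ) + 5) := Finset.sum_le_sum fun i _ => hbound i
        _ = 3 * (m : ℝ) + 5 := by rw [← Finset.sum_mul, hPsum, one_mul]
    set E := Finset.univ.filter (fun j : Fin n => j.val % 2 = 0) with hE
    set O := Finset.univ.filter (fun j : Fin n => ¬ j.val % 2 = 0) with hO
    have hEO : E.card + O.card = n := by
      rw [hE, hO, Finset.card_filter_add_card_filter_not, Finset.card_univ,
        Fintype.card_fin]
    have hEcard : E.card ≤ n / 2 := by
      have : E.card ≤ (Finset.range (n / 2)).card := by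
        apply Finset.card_le_card_of_injOn (fun j => (j : Fin n).val / 2)
        · intro j hj
          simp only [hE, Finset.mem_filter, Finset.mem_univ, true_and] at hj
          simp only [Finset.mem_coe, Finset.mem_range]
          have := (j : Fin n).isLt
          omega
        · intro j hj k hk hjk2
          simp only [hE, Finset.coe_filter, Set.mem_setOf_eq, Finset.mem_univ,
            true_and] at hj hk
          have hjk3 : (j : Fin n).val / 2 = (k : Fin n).val / 2 := hjk2
          apply Fin.ext
          omega
      rwa [Finset.card_range] at this
    have hOcard : O.card ≤ n / 2 := by
      have : O.card ≤ (Finset.range (n / 2)).card := by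
        apply Finset.card_le_card_of_injOn (fun j => (j : Fin n).val / 2)
        · intro j hj
          simp only [hO, Finset.mem_filter, Finset.mem_univ, true_and] at hj
          simp only [Finset.mem_coe, Finset.mem_range]
          have := (j : Fin n).isLt
          omega
        · intro j hj k hk hjk2
          simp only [hO, Finset.coe_filter, Set.mem_setOf_eq, Finset.mem_univ,
            true_and] at hj hk
          have hjk3 : (j : Fin n).val / 2 = (k : Fin n).val / 2 := hjk2
          apply Fin.ext
          omega
      rwa [Finset.card_range] at this
    have hEeq : E.card = n / 2 := by omega
    have hOeq : O.card = n / 2 := by omega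
    have hstep : ∀ j ∈ O, (E.card : ℝ) * (1/2) ≤ (E.card : ℝ) * s j + ∑ k ∈ E, s k := by
      intro j hjO
      simp only [hO, Finset.mem_filter, Finset.mem_univ, true_and] at hjO
      have hsumle : ∑ k ∈ E, (1/2 : ℝ) ≤ ∑ k ∈ E, (s j + s k) := by
        apply Finset.sum_le_sum
        intro k hkE
        simp only [hE, Finset.mem_filter, Finset.mem_univ, true_and] at hkE
        exact hkey j k hjO hkE
      rw [Finset.sum_const, nsmul_eq_mul, Finset.sum_add_distrib, Finset.sum_const,
        nsmul_eq_mul] at hsumle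
      linarith
    have hsum2 : (O.card : ℝ) * ((E.card : ℝ) * (1/2))
        ≤ (E.card : ℝ) * (∑ j ∈ O, s j) + (O.card : ℝ) * (∑ k ∈ E, s k) := by
      calc (O.card : ℝ) * ((E.card : ℝ) * (1/2))
          = ∑ _j ∈ O, ((E.card : ℝ) * (1/2)) := by
            rw [Finset.sum_const, nsmul_eq_mul]
        _ ≤ ∑ j ∈ O, ((E.card : ℝ) * s j + ∑ k ∈ E, s k) := Finset.sum_le_sum hstep
        _ = (E.card : ℝ) * (∑ j ∈ O, s j) + (O.card : ℝ) * (∑ k ∈ E, s k) := by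
            rw [Finset.sum_add_distrib, ← Finset.mul_sum, Finset.sum_const, nsmul_eq_mul]
    have hOle : ∑ j ∈ O, s j ≤ ∑ j, s j :=
      Finset.sum_le_sum_of_subset_of_nonneg (Finset.subset_univ _) (fun j _ _ => hs0 j)
    have hEle : ∑ j ∈ E, s j ≤ ∑ j, s j :=
      Finset.sum_le_sum_of_subset_of_nonneg (Finset.subset_univ _) (fun j _ _ => hs0 j)
    set q : ℝ := ((n / 2 : ℕ) : ℝ) with hq
    have hcast : q * 2 = (n : ℝ) := by
      rw [hq]
      have h22 : (n / 2) * 2 = n := by omega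
      exact_mod_cast h22
    have hq0 : (0 : ℝ) < q := by
      rw [hq]
      have : 0 < n / 2 := by omega
      exact_mod_cast this
    rw [hEeq, hOeq] at hsum2
    have hMM : (m : ℝ) * (m : ℝ) ≤ (n : ℝ) := by exact_mod_cast hmn
    have hM100 : (100 : ℝ) ≤ (m : ℝ) := by exact_mod_cast hm
    have hA : q * (∑ j ∈ O, s j) ≤ q * (3 * (m : ℝ) + 5) :=
      mul_le_mul_of_nonneg_left (le_trans hOle hT) hq0.le
    have hB : q * (∑ j ∈ E, s j) ≤ q * (3 * (m : ℝ) + 5) :=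
      mul_le_mul_of_nonneg_left (le_trans hEle hT) hq0.le
    have hfin : q * (q * (1/2)) ≤ 2 * (q * (3 * (m : ℝ) + 5)) := by
      rw [← hq] at hsum2
      linarith
    have hq2 : 12 * (m : ℝ) + 20 < q := by nlinarith
    nlinarith [mul_pos hq0 (show (0:ℝ) < q - (12 * (m:ℝ) + 20) by linarith)]
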